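/- Let n ≥ 2 and let d_1, …, d_n be positive real numbers. For indices 0 ≤ i < j ≤ n define s(i,j) = Σ_{k=i+1}^{j-1} d_k + max_{i ≤ k ≤ j-1} d_k. Define M(n) = d_n and, recursively for 1 ≤ i < n, M(i) = min_{i < j ≤ n} max( d_i + M(j), d_i + s(i,j) + d_j ). Then M(1) equals the minimum, over all checkpoint sets C ⊆ {1,…,n} with 1 ∈ C and n ∈ C, of the peak memory peak(C) = max_{i ∈ C, i > 1} m_C(i), where for i ∈ C with i > 1 and previous checkpoint h = max{c ∈ C : c < i}, m_C(i) = Σ_{c ∈ C, c ≤ i} d_c + Σ_{k=h+1}^{i-1} d_k + max_{h ≤ k ≤ i-1} d_k. -/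
import Mathlib


/-- `segSum d i j = Σ_{k=i+1}^{j-1} d_k`. -/
noncomputable def segSum (d : ℕ → ℝ) (i j : ℕ) : ℝ := ∑ k ∈ Finset.Ioo i j, d k

/-- `segMax d i j = max_{i ≤ k ≤ j-1} d_k` (junk value `0` when `j ≤ i`). -/
noncomputable def segMax (d : ℕ → ℝ) (i j : ℕ) : ℝ :=
  if h : i < j then (Finset.Ico i j).sup' (Finset.nonempty_Ico.mpr h) d else 0

/-- `s(i,j) = Σ_{k=i+1}^{j-1} d_k + max_{i ≤ k ≤ j-1} d_k`. -/
noncomputable def sfun (d : ℕ → ℝ) (i j : ℕ) : ℝ := segSum d i j + segMax d i j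

/-- The previous checkpoint `h = max {c ∈ C : c < i}`. -/
noncomputable def prevCkpt (C : Finset ℕ) (i : ℕ) : ℕ :=
  sSup {c : ℕ | c ∈ C ∧ c < i}

/-- The backward memory usage at a checkpoint `i ∈ C` with previous checkpoint
`h`: `m_C(i) = Σ_{c ∈ C, c ≤ i} d_c + Σ_{k=h+1}^{i-1} d_k + max_{h ≤ k ≤ i-1} d_k`. -/
noncomputable def mUsage (d : ℕ → ℝ) (C : Finset ℕ) (i : ℕ) : ℝ :=
  (∑ c ∈ C.filter (· ≤ i), d c) + segSum d (prevCkpt C i) i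
    + segMax d (prevCkpt C i) i

/-- The peak memory of a checkpoint set: `peak(C) = max_{i ∈ C, i > 1} m_C(i)`. -/
noncomputable def peak (d : ℕ → ℝ) (C : Finset ℕ) : ℝ :=
  sSup {y : ℝ | ∃ i ∈ C, 1 < i ∧ y = mUsage d C i}

/-- The dynamic checkpoint selection problem: the value `M(1)` of the
dynamic-programming recursion `M(n) = d_n`,
`M(i) = min_{i < j ≤ n} max(d_i + M(j), d_i + s(i,j) + d_j)` for `1 ≤ i < n`,
equals the minimum peak memory over all checkpoint sets `C ⊆ {1,…,n}` with
`1 ∈ C` and `n ∈ C`. -/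
lemma segSum_nonneg' {n : ℕ} {d : ℕ → ℝ} (hd : ∀ k, 1 ≤ k → k ≤ n → 0 < d k)
    {i j : ℕ} (hj : j ≤ n) : 0 ≤ segSum d i j := by
  apply Finset.sum_nonneg
  intro k hk
  rw [Finset.mem_Ioo] at hk
  exact (hd k (by omega) (by omega)).le

lemma segMax_nonneg' {n : ℕ} {d : ℕ → ℝ} (hd : ∀ k, 1 ≤ k → k ≤ n → 0 < d k)
    {i j : ℕ} (hi : 1 ≤ i) (hij : i < j) (hj : j ≤ n) : 0 ≤ segMax d i j := by
  rw [segMax, dif_pos hij]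
  exact (hd i hi (by omega)).le.trans
    (Finset.le_sup' d (Finset.mem_Ico.mpr ⟨le_rfl, hij⟩))

lemma prevCkpt_eq' {C : Finset ℕ} {i j : ℕ} (hiC : i ∈ C) (hij : i < j)
    (hmax : ∀ c ∈ C, c < j → c ≤ i) : prevCkpt C j = i :=
  IsGreatest.csSup_eq ⟨⟨hiC, hij⟩, fun c hc => hmax c hc.1 hc.2⟩

lemma prevCkpt_bounds' {C : Finset ℕ} (h1 : 1 ∈ C) {j : ℕ} (hj : 1 < j) :
    1 ≤ prevCkpt C j ∧ prevCkpt C j < j := by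
  have hbdd : BddAbove {c : ℕ | c ∈ C ∧ c < j} := ⟨j, fun c hc => hc.2.le⟩
  have hne : ({c : ℕ | c ∈ C ∧ c < j} : Set ℕ).Nonempty := ⟨1, h1, hj⟩
  have hmem := Nat.sSup_mem hne hbdd
  exact ⟨le_csSup hbdd ⟨h1, hj⟩, hmem.2⟩

lemma Dset_finite' (n : ℕ) (d : ℕ → ℝ) (M : ℕ → ℝ) (i : ℕ) :
    {x : ℝ | ∃ j, i < j ∧ j ≤ n ∧
      x = max (d i + M j) (d i + sfun d i j + d j)}.Finite := by
  have : {x : ℝ | ∃ j, i < j ∧ j ≤ n ∧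
      x = max (d i + M j) (d i + sfun d i j + d j)} ⊆
      (fun j => max (d i + M j) (d i + sfun d i j + d j)) '' (Set.Ioc i n) := by
    rintro x ⟨j, h1, h2, rfl⟩
    exact ⟨j, ⟨h1, h2⟩, rfl⟩
  exact ((Set.finite_Ioc i n).image _).subset this

lemma peakSet_finite' (d : ℕ → ℝ) (C : Finset ℕ) :
    {y : ℝ | ∃ i ∈ C, 1 < i ∧ y = mUsage d C i}.Finite := by
  have : {y : ℝ | ∃ i ∈ C, 1 < i ∧ y = mUsage d C i} ⊆ mUsage d C '' ↑C := by
    rintro y ⟨i, hi, _, rfl⟩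
    exact ⟨i, hi, rfl⟩
  exact (C.finite_toSet.image _).subset this

lemma chain_le' (n : ℕ) (hn : 2 ≤ n) (d : ℕ → ℝ)
    (hd : ∀ k, 1 ≤ k → k ≤ n → 0 < d k)
    (M : ℕ → ℝ) (hMn : M n = d n)
    (hM : ∀ i, 1 ≤ i → i < n → M i = sInf {x : ℝ | ∃ j, i < j ∧ j ≤ n ∧
        x = max (d i + M j) (d i + sfun d i j + d j)})
    (C : Finset ℕ) (hsub : C ⊆ Finset.Icc 1 n) (h1C : 1 ∈ C) (hnC : n ∈ C) :
    M 1 ≤ peak d C := by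
  have hfin := peakSet_finite' d C
  have hmemS : ∀ j ∈ C, 1 < j → mUsage d C j ≤ peak d C := fun j hj h1j =>
    le_csSup hfin.bddAbove ⟨j, hj, h1j, rfl⟩
  have key : ∀ m : ℕ, ∀ i ∈ C, n - i = m →
      M i + ∑ c ∈ C.filter (· < i), d c ≤ peak d C := by
    intro m
    induction m using Nat.strong_induction_on with
    | _ m ih =>
      intro i hiC hm
      have hi1 : 1 ≤ i := (Finset.mem_Icc.mp (hsub hiC)).1
      have hin : i ≤ n := (Finset.mem_Icc.mp (hsub hiC)).2
      rcases eq_or_lt_of_le hin with heq | hlt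
      · subst heq
        have hfil : C.filter (· ≤ i) = C :=
          Finset.filter_true_of_mem fun c hc => (Finset.mem_Icc.mp (hsub hc)).2
        have herase : C.erase i = C.filter (· < i) := by
          ext c
          simp only [Finset.mem_erase, Finset.mem_filter]
          constructor
          · rintro ⟨hne, hc⟩
            exact ⟨hc, lt_of_le_of_ne (Finset.mem_Icc.mp (hsub hc)).2 hne⟩
          · rintro ⟨hc, hlt'⟩
            exact ⟨hlt'.ne, hc⟩
        have e1 : ∑ c ∈ C.filter (· < i), d c + d i = ∑ c ∈ C, d c := by
          rw [← herase]; exact Finset.sum_erase_add _ _ hiC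
        have hb := hmemS i hiC (by omega)
        simp only [mUsage, hfil] at hb
        obtain ⟨hp1, hpn⟩ := prevCkpt_bounds' h1C (show 1 < i by omega)
        have hs : 0 ≤ segSum d (prevCkpt C i) i := segSum_nonneg' hd le_rfl
        have hsm : 0 ≤ segMax d (prevCkpt C i) i := segMax_nonneg' hd hp1 hpn le_rfl
        rw [hMn]
        linarith
      · -- inductive step: i < n
        have hjset : sInf {c : ℕ | c ∈ C ∧ i < c} ∈ {c : ℕ | c ∈ C ∧ i < c} :=
          Nat.sInf_mem ⟨n, hnC, hlt⟩
        set j := sInf {c : ℕ | c ∈ C ∧ i < c} with hj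
        obtain ⟨hjC, hij⟩ := hjset
        have hjn : j ≤ n := (Finset.mem_Icc.mp (hsub hjC)).2
        have hjmin : ∀ c ∈ C, i < c → j ≤ c := fun c hc h => Nat.sInf_le ⟨hc, h⟩
        have hMle : M i ≤ max (d i + M j) (d i + sfun d i j + d j) := by
          rw [hM i hi1 hlt]
          exact csInf_le (Dset_finite' n d M i).bddBelow ⟨j, hij, hjn, rfl⟩
        have hfj : C.filter (· < j) = insert i (C.filter (· < i)) := by
          ext c
          simp only [Finset.mem_filter, Finset.mem_insert]
          constructor
          · rintro ⟨hc, hcj⟩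
            rcases lt_trichotomy c i with h | h | h
            · exact Or.inr ⟨hc, h⟩
            · exact Or.inl h
            · exact absurd (hjmin c hc h) (by omega)
          · rintro (rfl | ⟨hc, hci⟩)
            · exact ⟨hiC, hij⟩
            · exact ⟨hc, hci.trans hij⟩
        have hinotin : i ∉ C.filter (· < i) := by simp
        have hsumj : ∑ c ∈ C.filter (· < j), d c = d i + ∑ c ∈ C.filter (· < i), d c := by
          rw [hfj, Finset.sum_insert hinotin]
        have hIH : M j + ∑ c ∈ C.filter (· < j), d c ≤ peak d C :=
          ih (n - j) (by omega) j hjC rfl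
        have hprev : prevCkpt C j = i :=
          prevCkpt_eq' hiC hij fun c hc hcj => by
            by_contra h
            exact absurd (hjmin c hc (by omega)) (by omega)
        have hfilj : C.filter (· ≤ j) = insert j (C.filter (· < j)) := by
          ext c
          simp only [Finset.mem_filter, Finset.mem_insert]
          constructor
          · rintro ⟨hc, hcj⟩
            rcases eq_or_lt_of_le hcj with h | h
            · exact Or.inl h
            · exact Or.inr ⟨hc, h⟩
          · rintro (rfl | ⟨hc, h⟩)
            · exact ⟨hjC, le_rfl⟩
            · exact ⟨hc, h.le⟩
        have hjnotin : j ∉ C.filter (· < j) := by simp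
        have hmU : mUsage d C j = d j + d i + (∑ c ∈ C.filter (· < i), d c)
            + segSum d i j + segMax d i j := by
          simp only [mUsage, hprev, hfilj, Finset.sum_insert hjnotin, hsumj]
          ring
        have hb := hmemS j hjC (by omega)
        rcases le_max_iff.mp hMle with h | h
        · linarith
        · simp only [sfun] at h
          linarith
  have hkey := key (n - 1) 1 h1C rfl
  have hfe : C.filter (· < 1) = ∅ :=
    Finset.filter_false_of_mem fun c hc => by
      have := (Finset.mem_Icc.mp (hsub hc)).1; omega
  rw [hfe, Finset.sum_empty, add_zero] at hkey
  exact hkey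

lemma exists_chain' (n : ℕ) (hn : 2 ≤ n) (d : ℕ → ℝ)
    (M : ℕ → ℝ) (hMn : M n = d n)
    (hM : ∀ i, 1 ≤ i → i < n → M i = sInf {x : ℝ | ∃ j, i < j ∧ j ≤ n ∧
        x = max (d i + M j) (d i + sfun d i j + d j)}) :
    ∀ m : ℕ, ∀ i, 1 ≤ i → i ≤ n → n - i = m →
      ∃ C : Finset ℕ, C ⊆ Finset.Icc i n ∧ i ∈ C ∧ n ∈ C ∧
        ∀ j ∈ C, i < j →
          (∑ c ∈ C.filter (· ≤ j), d c) + segSum d (prevCkpt C j) j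
            + segMax d (prevCkpt C j) j ≤ M i := by
  intro m
  induction m using Nat.strong_induction_on with
  | _ m ih =>
    intro i hi1 hin hm
    rcases eq_or_lt_of_le hin with heq | hlt
    · refine ⟨{n}, ?_, ?_, Finset.mem_singleton_self n, ?_⟩
      · simp only [Finset.singleton_subset_iff, Finset.mem_Icc]
        omega
      · rw [heq]; exact Finset.mem_singleton_self n
      · intro j hjmem hijlt
        rw [Finset.mem_singleton] at hjmem
        omega
    · have hMi : M i = sInf {x : ℝ | ∃ j, i < j ∧ j ≤ n ∧
          x = max (d i + M j) (d i + sfun d i j + d j)} := hM i hi1 hlt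
      have hne : {x : ℝ | ∃ j, i < j ∧ j ≤ n ∧
          x = max (d i + M j) (d i + sfun d i j + d j)}.Nonempty :=
        ⟨_, n, hlt, le_rfl, rfl⟩
      have hmem := hne.csInf_mem (Dset_finite' n d M i)
      rw [← hMi] at hmem
      obtain ⟨j, hij, hjn, hMi_eq⟩ := hmem
      obtain ⟨C', hC'sub, hjC', hnC', hprop'⟩ :=
        ih (n - j) (by omega) j (by omega) hjn rfl
      have hgej : ∀ c ∈ C', j ≤ c := fun c hc => (Finset.mem_Icc.mp (hC'sub hc)).1
      have hinotC' : i ∉ C' := fun h => by have := hgej i h; omega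
      refine ⟨insert i C', ?_, Finset.mem_insert_self i C',
        Finset.mem_insert_of_mem hnC', ?_⟩
      · intro c hc
        rcases Finset.mem_insert.mp hc with rfl | hc'
        · exact Finset.mem_Icc.mpr ⟨le_rfl, hin⟩
        · have := Finset.mem_Icc.mp (hC'sub hc')
          exact Finset.mem_Icc.mpr ⟨by omega, this.2⟩
      · intro j' hj' hij'
        rcases Finset.mem_insert.mp hj' with rfl | hj'C'
        · omega
        · have hjj' : j ≤ j' := hgej j' hj'C'
          rcases eq_or_lt_of_le hjj' with rfl | hjlt
          · -- j' = j (here rfl : j = j')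
            have hfil : (insert i C').filter (· ≤ j) = insert i {j} := by
              ext c
              simp only [Finset.mem_filter, Finset.mem_insert, Finset.mem_singleton]
              constructor
              · rintro ⟨(rfl | hc), hle⟩
                · exact Or.inl rfl
                · exact Or.inr (le_antisymm hle (hgej c hc))
              · rintro (rfl | rfl)
                · exact ⟨Or.inl rfl, hij.le⟩
                · exact ⟨Or.inr hjC', le_rfl⟩
            have hprev : prevCkpt (insert i C') j = i :=
              prevCkpt_eq' (Finset.mem_insert_self i C') hij fun c hc hcj => by
                rcases Finset.mem_insert.mp hc with rfl | hc'
                · exact le_rfl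
                · exact absurd (hgej c hc') (by omega)
            have hsum : ∑ c ∈ (insert i C').filter (· ≤ j), d c = d i + d j := by
              rw [hfil, Finset.sum_insert (by simp; omega), Finset.sum_singleton]
            rw [hsum, hprev]
            have h2 : d i + sfun d i j + d j ≤ M i := by
              rw [hMi_eq]; exact le_max_right _ _
            simp only [sfun] at h2
            linarith
          · -- j < j'
            have hfil : (insert i C').filter (· ≤ j') = insert i (C'.filter (· ≤ j')) := by
              rw [Finset.filter_insert, if_pos (by omega : i ≤ j')]
            have hino : i ∉ C'.filter (· ≤ j') := fun h =>
              hinotC' (Finset.mem_filter.mp h).1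
            have hprev : prevCkpt (insert i C') j' = prevCkpt C' j' := by
              have hset : {c : ℕ | c ∈ insert i C' ∧ c < j'} =
                  insert i {c : ℕ | c ∈ C' ∧ c < j'} := by
                ext c
                simp only [Finset.mem_insert, Set.mem_insert_iff, Set.mem_setOf_eq]
                constructor
                · rintro ⟨(rfl | hc), hlt'⟩
                  · exact Or.inl rfl
                  · exact Or.inr ⟨hc, hlt'⟩
                · rintro (rfl | ⟨hc, hlt'⟩)
                  · exact ⟨Or.inl rfl, hij'⟩
                  · exact ⟨Or.inr hc, hlt'⟩
              have hbdd : BddAbove {c : ℕ | c ∈ C' ∧ c < j'} := ⟨j', fun c hc => hc.2.le⟩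
              have hne' : {c : ℕ | c ∈ C' ∧ c < j'}.Nonempty := ⟨j, hjC', hjlt⟩
              rw [prevCkpt, prevCkpt, hset, csSup_insert hbdd hne']
              exact sup_eq_right.mpr ((by omega : i ≤ j).trans (le_csSup hbdd ⟨hjC', hjlt⟩))
            rw [hfil, Finset.sum_insert hino, hprev]
            have h2 := hprop' j' hj'C' hjlt
            have h3 : d i + M j ≤ M i := by
              rw [hMi_eq]; exact le_max_left _ _
            linarith

theorem dynamic_checkpoint_selection_correct (n : ℕ) (hn : 2 ≤ n)
    (d : ℕ → ℝ) (hd : ∀ k, 1 ≤ k → k ≤ n → 0 < d k)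
    (M : ℕ → ℝ) (hMn : M n = d n)
    (hM : ∀ i, 1 ≤ i → i < n →
      M i = sInf {x : ℝ | ∃ j, i < j ∧ j ≤ n ∧
        x = max (d i + M j) (d i + sfun d i j + d j)}) :
    M 1 = sInf {x : ℝ | ∃ C : Finset ℕ, C ⊆ Finset.Icc 1 n ∧ 1 ∈ C ∧ n ∈ C ∧
      x = peak d C} := by
  have h1n : (1 : ℕ) ∈ Finset.Icc 1 n := Finset.mem_Icc.mpr ⟨le_rfl, by omega⟩
  have hnn : n ∈ Finset.Icc 1 n := Finset.mem_Icc.mpr ⟨by omega, le_rfl⟩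
  have hTne : {x : ℝ | ∃ C : Finset ℕ, C ⊆ Finset.Icc 1 n ∧ 1 ∈ C ∧ n ∈ C ∧
      x = peak d C}.Nonempty :=
    ⟨peak d (Finset.Icc 1 n), Finset.Icc 1 n, subset_rfl, h1n, hnn, rfl⟩
  have hTbdd : BddBelow {x : ℝ | ∃ C : Finset ℕ, C ⊆ Finset.Icc 1 n ∧ 1 ∈ C ∧ n ∈ C ∧
      x = peak d C} := by
    refine ⟨0, ?_⟩
    rintro x ⟨C, hsub, h1C, hnC, rfl⟩
    have h0 : 0 ≤ mUsage d C n := by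
      obtain ⟨hp1, hpn⟩ := prevCkpt_bounds' h1C (by omega : 1 < n)
      have hs : 0 ≤ segSum d (prevCkpt C n) n := segSum_nonneg' hd le_rfl
      have hsm : 0 ≤ segMax d (prevCkpt C n) n := segMax_nonneg' hd hp1 hpn le_rfl
      have hsum : 0 ≤ ∑ c ∈ C.filter (· ≤ n), d c :=
        Finset.sum_nonneg fun c hc => by
          have := Finset.mem_Icc.mp (hsub (Finset.mem_filter.mp hc).1)
          exact (hd c this.1 this.2).le
      simp only [mUsage]
      linarith
    exact h0.trans (le_csSup (peakSet_finite' d C).bddAbove ⟨n, hnC, by omega, rfl⟩)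
  apply le_antisymm
  · apply le_csInf hTne
    rintro x ⟨C, hsub, h1C, hnC, rfl⟩
    exact chain_le' n hn d hd M hMn hM C hsub h1C hnC
  · obtain ⟨C, hsub, h1C, hnC, hprop⟩ :=
      exists_chain' n hn d M hMn hM (n - 1) 1 le_rfl (by omega) rfl
    have hpeak : peak d C ≤ M 1 := by
      have hSne : ({y : ℝ | ∃ i ∈ C, 1 < i ∧ y = mUsage d C i}).Nonempty :=
        ⟨mUsage d C n, n, hnC, by omega, rfl⟩
      rw [peak]
      apply csSup_le hSne
      rintro y ⟨j, hjC, h1j, rfl⟩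
      simpa only [mUsage] using hprop j hjC h1j
    exact (csInf_le hTbdd ⟨C, hsub, h1C, hnC, rfl⟩).trans hpeak
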